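/- arXiv:2009.08844 — 3 statements merged into one kernel-verified Lean document; each statement's English description precedes it below -/
import Mathlib

section
/- Huffman achievability: given integer arrival times a_1,...,a_m with weight W = ∑ 2^{a_i}, there exists a binary tree with m leaves, leaf i having depth d_i, such that max_i (a_i + d_i) ≤ ⌈log₂ W⌉. -/
/-- Binary trees whose leaves carry integer arrival times. -/
inductive BTree where
  | leaf : ℤ → BTree
  | node : BTree → BTree → BTree

/-- The delay of a tree: the maximum over leaves of (arrival time + leaf depth). -/
def BTree.delay : BTree → ℤ
  | .leaf a => a
  | .node l r => max l.delay r.delay + 1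

/-- The list of leaf arrival times, left to right. -/
def BTree.leaves : BTree → List ℤ
  | .leaf a => [a]
  | .node l r => l.leaves ++ r.leaves

/-- The list of leaf depths, left to right. -/
def BTree.depths : BTree → List ℕ
  | .leaf _ => [0]
  | .node l r => l.depths.map (· + 1) ++ r.depths.map (· + 1)

private noncomputable def hw (as : List ℤ) : ℝ := (as.map (fun a => (2 : ℝ) ^ a)).sum

private lemma hw_nonneg (as : List ℤ) : 0 ≤ hw as := by
  apply List.sum_nonneg
  intro x hx
  simp only [List.mem_map] at hx
  obtain ⟨a, _, rfl⟩ := hx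
  positivity

private lemma hw_pos (as : List ℤ) (h : as ≠ []) : 0 < hw as := by
  apply List.sum_pos
  · intro x hx
    simp only [List.mem_map] at hx
    obtain ⟨a, _, rfl⟩ := hx
    positivity
  · simpa using h

private lemma hw_append (l r : List ℤ) : hw (l ++ r) = hw l + hw r := by
  simp [hw]

private lemma pow_split (x b : ℤ) (hx : b ≤ x) :
    (2:ℝ)^x = (2:ℝ)^((x-b).toNat) * (2:ℝ)^b := by
  rw [← zpow_natCast (2:ℝ), Int.toNat_of_nonneg (by linarith), ← zpow_add₀ (by norm_num : (2:ℝ) ≠ 0)]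
  ring_nf

/-- A sum of powers 2^a with all a ≥ b is a natural multiple of 2^b. -/
private lemma hw_eq_nat_mul (l : List ℤ) (b : ℤ) (h : ∀ a ∈ l, b ≤ a) :
    hw l = ((l.map (fun a => 2 ^ (a - b).toNat)).sum : ℕ) * (2 : ℝ) ^ b := by
  induction l with
  | nil => simp [hw]
  | cons x xs ih =>
    have hx : b ≤ x := h x List.mem_cons_self
    have ihh := ih (fun a ha => h a (List.mem_cons_of_mem _ ha))
    simp only [hw, List.map_cons, List.sum_cons] at ihh ⊢
    rw [ihh, pow_split x b hx]
    push_cast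
    ring

/-- The splitting lemma: a sorted-descending list of length ≥ 2 with all entries ≤ c
and total weight ≤ 2^(c+1) splits into two nonempty parts each of weight ≤ 2^c. -/
private lemma split_lemma (as : List ℤ) (hs : as.Pairwise (· ≥ ·)) (c : ℤ)
    (hall : ∀ a ∈ as, a ≤ c) (hlen : 2 ≤ as.length)
    (hsum : hw as ≤ 2 ^ (c+1)) :
    ∃ L R : List ℤ, as = L ++ R ∧ L ≠ [] ∧ R ≠ [] ∧ hw L ≤ 2 ^ c ∧ hw R ≤ 2 ^ c := by
  classical
  have hne : as ≠ [] := by intro hh; simp [hh] at hlen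
  have hlenpos : 0 < as.length := by omega
  -- head bound
  obtain ⟨a0, as0, rfl⟩ := List.exists_cons_of_ne_nil hne
  by_cases htot : hw (a0 :: as0) ≤ 2 ^ c
  · -- split off the head
    refine ⟨[a0], as0, by simp, by simp, ?_, ?_, ?_⟩
    · intro hh; simp [hh] at hlen
    · have : (2:ℝ)^a0 ≤ 2^c := by
        have := hall a0 List.mem_cons_self
        exact zpow_le_zpow_right₀ (by norm_num) this
      simpa [hw] using this
    · have h1 : hw (a0 :: as0) = (2:ℝ)^a0 + hw as0 := by simp [hw]
      have h2 : (0:ℝ) < 2^a0 := by positivity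
      linarith
  push_neg at htot
  set l : List ℤ := a0 :: as0 with hl
  set P : ℕ → Prop := fun k => hw (l.take k) ≤ 2 ^ c with hP
  have hP1 : P 1 := by
    have h0 : l.take 1 = [a0] := rfl
    have hb0 := hall a0 List.mem_cons_self
    have h1 : (2:ℝ)^a0 ≤ 2^c := zpow_le_zpow_right₀ (by norm_num) hb0
    show hw (l.take 1) ≤ 2 ^ c
    rw [h0]
    simpa [hw] using h1
  set k := Nat.findGreatest P l.length with hk
  have hk1 : 1 ≤ k := Nat.le_findGreatest (by omega) hP1
  have hkle : k ≤ l.length := Nat.findGreatest_le l.length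
  have hPk : P k := Nat.findGreatest_spec (m := 1) (by omega) hP1
  have hklt : k < l.length := by
    rcases lt_or_eq_of_le hkle with hh | hh
    · exact hh
    · exfalso
      have : hw (l.take l.length) ≤ 2^c := by rw [← hh]; exact hPk
      rw [List.take_length] at this
      linarith
  have hnotP : ¬ P (k + 1) := Nat.findGreatest_is_greatest (n := l.length) (by omega) (by omega)
  -- take (k+1) sum = take k sum + 2^(l[k])
  set b : ℤ := l.get ⟨k, hklt⟩ with hb
  have hsucc : hw (l.take (k+1)) = hw (l.take k) + (2:ℝ)^b := by
    have : ((l.map (fun a => (2:ℝ)^a)).take (k+1)).sum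
        = ((l.map (fun a => (2:ℝ)^a)).take k).sum
          + (l.map (fun a => (2:ℝ)^a)).get ⟨k, by simpa using hklt⟩ := by
      apply List.sum_take_succ
    simpa [hw, List.map_take, hb] using this
  have hgt : 2 ^ c < hw (l.take k) + (2:ℝ)^b := by
    have := hnotP
    simp only [P, not_le] at this
    linarith [hsucc ▸ this]
  -- every element of take k is ≥ b
  have hmemge : ∀ a ∈ l.take k, b ≤ a := by
    intro a ha
    have hpw : l.Pairwise (· ≥ ·) := hs
    rw [← List.take_append_drop k l] at hpw
    rw [List.pairwise_append] at hpw
    have hbmem : b ∈ l.drop k := by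
      have hlt0 : 0 < (l.drop k).length := by simp; omega
      have heq0 : (l.drop k).get ⟨0, hlt0⟩ = l.get ⟨k, hklt⟩ := by
        simp
      rw [hb, ← heq0]
      exact List.get_mem _ _
    exact hpw.2.2 a ha b hbmem
  have hbc : b ≤ c := hall b (List.get_mem _ _)
  -- divisibility argument: hw (take k) ≥ 2^c
  have hSk_ge : (2:ℝ)^c ≤ hw (l.take k) := by
    set N : ℕ := ((l.take k).map (fun a => 2 ^ (a - b).toNat)).sum with hN
    have hNe : hw (l.take k) = (N : ℝ) * (2:ℝ)^b := hw_eq_nat_mul _ b hmemge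
    set M : ℕ := 2 ^ (c - b).toNat with hM
    have hMe : (2:ℝ)^c = (M : ℝ) * (2:ℝ)^b := by
      rw [hM]
      push_cast
      exact pow_split c b hbc
    rw [hMe, hNe]
    have hb0 : (0:ℝ) < (2:ℝ)^b := by positivity
    have : (M:ℝ) * 2^b < (N:ℝ) * 2^b + 2^b := by
      rw [← hMe, ← hNe]; exact hgt
    have hMN : (M:ℝ) < (N:ℝ) + 1 := by
      have := (mul_lt_mul_iff_left₀ hb0).mp (by linarith : (M:ℝ) * 2^b < ((N:ℝ) + 1) * 2^b)
      exact this
    have : M ≤ N := by exact_mod_cast Nat.lt_succ_iff.mp (by exact_mod_cast hMN)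
    have : (M:ℝ) ≤ (N:ℝ) := by exact_mod_cast this
    nlinarith
  refine ⟨l.take k, l.drop k, (List.take_append_drop k l).symm, ?_, ?_, hPk, ?_⟩
  · intro hh
    have := congrArg List.length hh
    simp at this
    omega
  · intro hh
    have := congrArg List.length hh
    simp at this
    omega
  · have : hw (l.take k) + hw (l.drop k) = hw l := by
      rw [← hw_append, List.take_append_drop]
    have h2 : (2:ℝ)^(c+1) = 2^c + 2^c := by
      rw [zpow_add₀ (by norm_num : (2:ℝ) ≠ 0)]
      ring
    rw [h2] at hsum
    linarith

/-- Build a tree from a sorted-descending nonempty list with weight ≤ 2^D. -/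
private lemma build : ∀ (n : ℕ) (as : List ℤ), as.length ≤ n → as.Pairwise (· ≥ ·) → as ≠ [] →
    ∀ D : ℤ, hw as ≤ 2 ^ D → ∃ T : BTree, T.leaves = as ∧ T.delay ≤ D := by
  intro n
  induction n with
  | zero =>
    intro as hlen _ hne
    interval_cases h : as.length
    · exact absurd (List.length_eq_zero_iff.mp h) hne
  | succ n ih =>
    intro as hlen hs hne D hsum
    match as, hne with
    | [a], _ =>
      refine ⟨.leaf a, rfl, ?_⟩
      have : (2:ℝ)^a ≤ 2^D := by simpa [hw] using hsum
      exact (zpow_le_zpow_iff_right₀ (by norm_num : (1:ℝ) < 2)).mp this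
    | a :: b :: rest, _ =>
      set as' := a :: b :: rest with has'
      have hlen2 : 2 ≤ as'.length := by simp [as']
      have hall : ∀ x ∈ as', x ≤ D - 1 := by
        intro x hx
        obtain ⟨s, t, hst⟩ := List.append_of_mem hx
        have hsum2 : hw as' = hw s + (2:ℝ)^x + hw t := by
          rw [hst, hw_append]
          simp [hw]
          try ring
        have hstne : s ≠ [] ∨ t ≠ [] := by
          by_contra hcon
          push_neg at hcon
          obtain ⟨h1, h2⟩ := hcon
          rw [h1, h2] at hst
          simp [as'] at hst
        have hpos : 0 < hw s + hw t := by
          rcases hstne with h1 | h1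
          · have := hw_pos s h1; have := hw_nonneg t; linarith
          · have := hw_pos t h1; have := hw_nonneg s; linarith
        have : (2:ℝ)^x < 2^D := by linarith [hsum2 ▸ hsum]
        have := (zpow_lt_zpow_iff_right₀ (by norm_num : (1:ℝ) < 2)).mp this
        omega
      obtain ⟨L, R, heq, hLne, hRne, hLsum, hRsum⟩ :=
        split_lemma as' hs (D - 1) hall hlen2 (by
          have : D - 1 + 1 = D := by ring
          rw [this]; exact hsum)
      have hlensplit : as'.length = L.length + R.length := by
        rw [heq, List.length_append]
      have hlen' : as'.length ≤ n + 1 := hlen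
      have hR1 : 1 ≤ R.length := List.length_pos_iff.mpr hRne
      have hL1 : 1 ≤ L.length := List.length_pos_iff.mpr hLne
      have hLlen : L.length ≤ n := by omega
      have hRlen : R.length ≤ n := by omega
      have hsL : L.Pairwise (· ≥ ·) := hs.sublist (heq ▸ (L.sublist_append_left R))
      have hsR : R.Pairwise (· ≥ ·) := hs.sublist (heq ▸ (L.sublist_append_right R))
      obtain ⟨TL, hTL, hTLd⟩ := ih L hLlen hsL hLne (D - 1) hLsum
      obtain ⟨TR, hTR, hTRd⟩ := ih R hRlen hsR hRne (D - 1) hRsum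
      refine ⟨.node TL TR, ?_, ?_⟩
      · simp [BTree.leaves, hTL, hTR, heq]
      · simp only [BTree.delay]
        have : max TL.delay TR.delay ≤ D - 1 := max_le hTLd hTRd
        omega

/-- Huffman achievability: given integer arrival times `a₁,…,a_m` with
`W = ∑ 2^(a_i)`, there is a binary tree on these leaves with
`max_i (a_i + d_i) ≤ ⌈log₂ W⌉`. -/
theorem huffman_achievability (as : List ℤ) (h : as ≠ []) :
    ∃ T : BTree, T.leaves.Perm as ∧
      T.delay ≤ ⌈Real.logb 2 ((as.map (fun a => (2 : ℝ) ^ a)).sum)⌉ := by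
  classical
  set W : ℝ := (as.map (fun a => (2 : ℝ) ^ a)).sum with hWdef
  have hWeq : W = hw as := rfl
  set D : ℤ := ⌈Real.logb 2 W⌉ with hD
  have hWpos : 0 < W := hWeq ▸ hw_pos as h
  have hW : W ≤ (2:ℝ) ^ D := by
    have h1 : Real.logb 2 W ≤ (D:ℝ) := Int.le_ceil _
    have h2 : (2:ℝ) ^ (Real.logb 2 W) ≤ (2:ℝ) ^ (D:ℝ) :=
      Real.rpow_le_rpow_of_exponent_le (by norm_num) h1
    rwa [Real.rpow_logb (by norm_num) (by norm_num) hWpos, Real.rpow_intCast] at h2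
  set sorted := as.insertionSort (· ≥ ·) with hsorteddef
  have hperm : sorted.Perm as := List.perm_insertionSort _ _
  have hsorted : sorted.Pairwise (· ≥ ·) := List.pairwise_insertionSort _ _
  have hsne : sorted ≠ [] := by
    intro hh
    have := hperm.length_eq
    rw [hh] at this
    simp at this
    exact h (List.length_eq_zero_iff.mp this.symm)
  have hsum : hw sorted = W := by
    rw [hWdef, hw]
    exact (hperm.map _).sum_eq
  obtain ⟨T, hleaves, hdelay⟩ := build sorted.length sorted le_rfl hsorted hsne D (hsum ▸ hW)
  exact ⟨T, hleaves ▸ hperm, hdelay⟩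
end

section
/- Optimal delay of a multi-input AND circuit: for integer arrival times a_1,...,a_m, the minimum over all binary trees with m leaves of max_i (a_i + d_i) equals ⌈log₂(∑_{i=1}^m 2^{a_i})⌉. -/
noncomputable def ADsum (as : List ℤ) : ℝ := (as.map (fun a => (2 : ℝ) ^ a)).sum

lemma ADsum_nil : ADsum [] = 0 := rfl

lemma ADsum_cons (a : ℤ) (l : List ℤ) : ADsum (a :: l) = (2:ℝ)^a + ADsum l := by
  simp [ADsum]

lemma ADsum_append (l₁ l₂ : List ℤ) : ADsum (l₁ ++ l₂) = ADsum l₁ + ADsum l₂ := by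
  simp [ADsum]

lemma ADsum_nonneg (l : List ℤ) : 0 ≤ ADsum l := by
  induction l with
  | nil => simp [ADsum_nil]
  | cons a t ih =>
    rw [ADsum_cons]
    have : (0:ℝ) < 2 ^ a := zpow_pos (by norm_num) a
    linarith

lemma ADsum_pos (l : List ℤ) (h : l ≠ []) : 0 < ADsum l := by
  cases l with
  | nil => exact absurd rfl h
  | cons a t =>
    rw [ADsum_cons]
    have : (0:ℝ) < 2 ^ a := zpow_pos (by norm_num) a
    have := ADsum_nonneg t
    linarith

lemma ADsum_perm {l₁ l₂ : List ℤ} (h : l₁.Perm l₂) : ADsum l₁ = ADsum l₂ :=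
  List.Perm.sum_eq (h.map _)

/-- Kraft-type inequality. -/
lemma AD_kraft (T : BTree) : ADsum T.leaves ≤ (2:ℝ) ^ T.delay := by
  induction T with
  | leaf a => simp [BTree.leaves, BTree.delay, ADsum]
  | node L R ihL ihR =>
    rw [BTree.leaves, ADsum_append, BTree.delay]
    have h2 : (1:ℝ) ≤ 2 := one_le_two
    have hL : (2:ℝ) ^ L.delay ≤ 2 ^ (max L.delay R.delay) :=
      zpow_le_zpow_right₀ h2 (le_max_left _ _)
    have hR : (2:ℝ) ^ R.delay ≤ 2 ^ (max L.delay R.delay) :=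
      zpow_le_zpow_right₀ h2 (le_max_right _ _)
    have : (2:ℝ) ^ (max L.delay R.delay + 1) = 2 ^ (max L.delay R.delay) * 2 := by
      rw [zpow_add₀ (by norm_num : (2:ℝ) ≠ 0)]; norm_num
    rw [this]
    linarith

/-- Replace a leaf with value `St.delay` in `T` by the tree `St`. -/
lemma AD_replace (St : BTree) : ∀ (T : BTree) (l : List ℤ),
    T.leaves.Perm (St.delay :: l) →
    ∃ T' : BTree, T'.leaves.Perm (St.leaves ++ l) ∧ T'.delay = T.delay := by
  intro T
  induction T with
  | leaf c =>
    intro l h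
    simp only [BTree.leaves] at h
    have hlen := h.length_eq
    simp only [List.length_singleton, List.length_cons] at hlen
    have hl : l = [] := by cases l with | nil => rfl | cons x t => exfalso; simp at hlen
    subst hl
    have hc : c = St.delay := by
      have h5 := h.mem_iff.mpr (List.mem_singleton_self St.delay)
      simp at h5
      exact h5.symm
    refine ⟨St, by simp, ?_⟩
    simp [BTree.delay, hc]
  | node L R ihL ihR =>
    intro l h
    simp only [BTree.leaves] at h
    have hmem : St.delay ∈ L.leaves ++ R.leaves := h.mem_iff.mpr List.mem_cons_self
    rcases List.mem_append.mp hmem with hL | hR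
    · have hLperm : L.leaves.Perm (St.delay :: (L.leaves.erase St.delay)) :=
        List.perm_cons_erase hL
      obtain ⟨L', hL'p, hL'd⟩ := ihL _ hLperm
      refine ⟨BTree.node L' R, ?_, ?_⟩
      · show (L'.leaves ++ R.leaves).Perm (St.leaves ++ l)
        have h2 : ((L.leaves.erase St.delay) ++ R.leaves).Perm l := by
          have h3 : (St.delay :: ((L.leaves.erase St.delay) ++ R.leaves)).Perm
              (St.delay :: l) :=
            ((hLperm.append_right R.leaves).symm).trans h
          exact h3.cons_inv
        have step1 : (L'.leaves ++ R.leaves).Perm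
            (St.leaves ++ ((L.leaves.erase St.delay) ++ R.leaves)) := by
          have := hL'p.append_right R.leaves
          rwa [List.append_assoc] at this
        exact step1.trans (h2.append_left _)
      · simp [BTree.delay, hL'd]
    · have hRperm : R.leaves.Perm (St.delay :: (R.leaves.erase St.delay)) :=
        List.perm_cons_erase hR
      obtain ⟨R', hR'p, hR'd⟩ := ihR _ hRperm
      refine ⟨BTree.node L R', ?_, ?_⟩
      · show (L.leaves ++ R'.leaves).Perm (St.leaves ++ l)
        have h2 : (L.leaves ++ R.leaves.erase St.delay).Perm l := by
          have h3 : (St.delay :: (L.leaves ++ R.leaves.erase St.delay)).Perm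
              (St.delay :: l) := by
            refine List.Perm.trans ?_ h
            exact (List.perm_middle.symm).trans ((hRperm.symm).append_left _)
          exact h3.cons_inv
        have step1 : (L.leaves ++ R'.leaves).Perm
            (L.leaves ++ (St.leaves ++ R.leaves.erase St.delay)) := hR'p.append_left _
        have step2 : (L.leaves ++ (St.leaves ++ R.leaves.erase St.delay)).Perm
            (St.leaves ++ (L.leaves ++ R.leaves.erase St.delay)) := by
          have : (L.leaves ++ (St.leaves ++ R.leaves.erase St.delay)) =
              ((L.leaves ++ St.leaves) ++ R.leaves.erase St.delay) := by
            rw [List.append_assoc]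
          rw [this]
          have : (St.leaves ++ (L.leaves ++ R.leaves.erase St.delay)) =
              ((St.leaves ++ L.leaves) ++ R.leaves.erase St.delay) := by
            rw [List.append_assoc]
          rw [this]
          exact (List.perm_append_comm).append_right _
        exact (step1.trans step2).trans (h2.append_left _)
      · simp [BTree.delay, hR'd]

lemma AD_shift (b : ℤ) (rest : List ℤ) (hrest : ∀ x ∈ rest, b ≤ x) :
    ∃ N : ℕ, ADsum rest = (2:ℝ)^b * N := by
  induction rest with
  | nil => exact ⟨0, by simp [ADsum_nil]⟩
  | cons x t ih =>
    obtain ⟨N, hN⟩ := ih (fun y hy => hrest y (List.mem_cons_of_mem _ hy))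
    have hx : b ≤ x := hrest x List.mem_cons_self
    refine ⟨2 ^ (x - b).toNat + N, ?_⟩
    have hxb : (2:ℝ) ^ x = 2 ^ b * 2 ^ ((x - b).toNat : ℕ) := by
      rw [← zpow_natCast (2:ℝ) (x-b).toNat, Int.toNat_of_nonneg (by linarith),
        ← zpow_add₀ (by norm_num : (2:ℝ) ≠ 0)]
      ring_nf
    rw [ADsum_cons, hN, hxb]
    push_cast
    ring

/-- The key numeric lemma for the Huffman merge step. -/
lemma AD_num (a b d : ℤ) (rest : List ℤ) (hab : a ≤ b) (hrest : ∀ x ∈ rest, b ≤ x)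
    (h1 : (2:ℝ)^(d-1) < ADsum ((b+1) :: rest)) (h2 : ADsum ((b+1) :: rest) ≤ 2^d) :
    (2:ℝ)^(d-1) < ADsum (a :: b :: rest) ∧ ADsum (a :: b :: rest) ≤ 2^d := by
  have two_ne : (2:ℝ) ≠ 0 := by norm_num
  have pa : (0:ℝ) < 2 ^ a := zpow_pos (by norm_num) a
  have pb : (0:ℝ) < 2 ^ b := zpow_pos (by norm_num) b
  have hab2 : (2:ℝ) ^ a ≤ 2 ^ b := zpow_le_zpow_right₀ one_le_two hab
  obtain ⟨N, hN⟩ := AD_shift b rest hrest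
  have hb1 : (2:ℝ) ^ (b+1) = 2 ^ b * 2 := by
    rw [zpow_add₀ two_ne]; norm_num
  have hS' : ADsum ((b+1) :: rest) = 2 ^ b * ((N:ℝ) + 2) := by
    rw [ADsum_cons, hN, hb1]; ring
  have hS : ADsum (a :: b :: rest) = 2 ^ b * ((N:ℝ) + 1) + 2 ^ a := by
    rw [ADsum_cons, ADsum_cons, hN]; ring
  constructor
  · -- lower bound: 2^(d-1) < S
    by_contra hcon
    push_neg at hcon
    -- S ≤ 2^(d-1)
    have hlt : (2:ℝ) ^ b * ((N:ℝ) + 1) < 2 ^ (d-1) := by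
      rw [hS] at hcon; linarith
    have hb_lt : b < d - 1 := by
      have : (2:ℝ) ^ b < 2 ^ (d-1) := by nlinarith [Nat.cast_nonneg (α := ℝ) N]
      exact (zpow_lt_zpow_iff_right₀ (by norm_num : (1:ℝ) < 2)).mp this
    have hsplit : (2:ℝ) ^ (d-1) = 2 ^ b * 2 ^ ((d-1-b).toNat : ℕ) := by
      rw [← zpow_natCast (2:ℝ) (d-1-b).toNat, Int.toNat_of_nonneg (by linarith),
        ← zpow_add₀ two_ne]
      ring_nf
    rw [hsplit] at hlt
    have hNlt : (N:ℝ) + 1 < 2 ^ ((d-1-b).toNat : ℕ) := by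
      have := (mul_lt_mul_iff_right₀ pb).mp hlt
      exact this
    have hNnat : N + 1 < 2 ^ (d-1-b).toNat := by exact_mod_cast hNlt
    have hNnat2 : N + 2 ≤ 2 ^ (d-1-b).toNat := hNnat
    have : ADsum ((b+1) :: rest) ≤ 2 ^ (d-1) := by
      rw [hS', hsplit]
      have : ((N:ℝ) + 2) ≤ ((2 ^ (d-1-b).toNat : ℕ) : ℝ) := by exact_mod_cast hNnat2
      have h2c : ((2 ^ (d-1-b).toNat : ℕ) : ℝ) = (2:ℝ) ^ ((d-1-b).toNat : ℕ) := by
        push_cast; ring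
      nlinarith
    linarith
  · -- upper bound: S ≤ 2^d, since S ≤ S'
    have : ADsum (a :: b :: rest) ≤ ADsum ((b+1) :: rest) := by
      rw [hS, hS']; nlinarith
    linarith

lemma AD_achieve : ∀ (n : ℕ) (as : List ℤ), as.length = n → as ≠ [] →
    ∃ T : BTree, T.leaves.Perm as ∧
      (2:ℝ)^(T.delay - 1) < ADsum as ∧ ADsum as ≤ 2^T.delay := by
  intro n
  induction n using Nat.strong_induction_on with
  | _ n ih =>
    intro as hlen hne
    have hperm_s : (as.insertionSort (· ≤ ·)).Perm as := List.perm_insertionSort _ _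
    have hsort : List.Pairwise (· ≤ ·) (as.insertionSort (· ≤ ·)) :=
      List.pairwise_insertionSort (r := (· ≤ ·)) _
    have hsum_s : ADsum (as.insertionSort (· ≤ ·)) = ADsum as := ADsum_perm hperm_s
    match hms : as.insertionSort (· ≤ ·) with
    | [] =>
      exfalso
      have h0 := hperm_s.length_eq
      rw [hms] at h0
      simp at h0
      exact hne (List.eq_nil_of_length_eq_zero h0.symm)
    | [a] =>
      rw [hms] at hperm_s hsum_s
      have hsum : ADsum as = (2:ℝ)^a := by
        rw [← hsum_s, ADsum_cons, ADsum_nil]; ring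
      refine ⟨BTree.leaf a, by simpa [BTree.leaves] using hperm_s, ?_, ?_⟩
      · rw [hsum]
        show (2:ℝ) ^ (a - 1) < 2 ^ a
        exact zpow_lt_zpow_right₀ (by norm_num : (1:ℝ) < 2) (by omega)
      · rw [hsum]
        show (2:ℝ) ^ a ≤ 2 ^ a
        exact le_rfl
    | a :: b :: rest =>
      rw [hms] at hperm_s hsum_s hsort
      obtain ⟨ha, hsort'⟩ := List.pairwise_cons.mp hsort
      obtain ⟨hb, _⟩ := List.pairwise_cons.mp hsort'
      have hab : a ≤ b := ha b List.mem_cons_self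
      -- induction hypothesis on the merged list
      have hlen' : ((b+1) :: rest).length < n := by
        have := hperm_s.length_eq
        rw [hlen] at this
        simp at this ⊢
        omega
      obtain ⟨T', hT'perm, hT'1, hT'2⟩ := ih _ hlen' ((b+1) :: rest) rfl (by simp)
      -- numeric bounds transfer
      obtain ⟨hnum1, hnum2⟩ := AD_num a b T'.delay rest hab hb hT'1 hT'2
      -- replace the leaf (b+1) in T' by node (leaf a) (leaf b)
      have hst : (BTree.node (.leaf a) (.leaf b)).delay = b + 1 := by
        simp [BTree.delay, max_eq_right hab]
      obtain ⟨T, hTperm, hTdel⟩ := AD_replace (BTree.node (.leaf a) (.leaf b)) T' rest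
        (by rw [hst]; exact hT'perm)
      have hTleaves : T.leaves.Perm (a :: b :: rest) := by
        simpa [BTree.leaves] using hTperm
      refine ⟨T, hTleaves.trans hperm_s, ?_, ?_⟩
      · rw [← hsum_s, hTdel]; exact hnum1
      · rw [← hsum_s, hTdel]; exact hnum2

/-- Optimal delay of a multi-input AND: the minimum delay over all binary trees
with leaf arrival times `a₁,…,a_m` equals `⌈log₂ (∑_i 2^(a_i))⌉`. -/
theorem optimal_and_delay (as : List ℤ) (h : as ≠ []) :
    IsLeast {d : ℤ | ∃ T : BTree, T.leaves.Perm as ∧ T.delay = d}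
      ⌈Real.logb 2 ((as.map (fun a => (2 : ℝ) ^ a)).sum)⌉ := by
  have hb2 : (1:ℝ) < 2 := by norm_num
  have hSdef : (as.map (fun a => (2 : ℝ) ^ a)).sum = ADsum as := rfl
  have hSpos : 0 < ADsum as := ADsum_pos as h
  constructor
  · -- membership
    obtain ⟨T, hperm, h1, h2⟩ := AD_achieve as.length as rfl h
    refine ⟨T, hperm, ?_⟩
    rw [hSdef]
    refine (Int.ceil_eq_iff.mpr ⟨?_, ?_⟩).symm
    · -- ↑T.delay - 1 < logb 2 (ADsum as)
      rw [show ((T.delay : ℝ) - 1) = ((T.delay - 1 : ℤ) : ℝ) by push_cast; ring]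
      rw [Real.lt_logb_iff_rpow_lt hb2 hSpos, Real.rpow_intCast]
      exact h1
    · rw [Real.logb_le_iff_le_rpow hb2 hSpos, Real.rpow_intCast]
      exact h2
  · -- lower bound
    rintro d ⟨T, hperm, rfl⟩
    rw [hSdef]
    rw [Int.ceil_le, Real.logb_le_iff_le_rpow hb2 hSpos, Real.rpow_intCast]
    calc ADsum as = ADsum T.leaves := (ADsum_perm hperm).symm
      _ ≤ (2:ℝ) ^ T.delay := AD_kraft T
end

section
/- Delay bound via weight: if C is an undetermined circuit whose output gate has k predecessors with integer arrival times d_1,...,d_k, then replacing the output gate by a Huffman tree of fan-in-2 gates of the same type yields a circuit of the same Boolean function with delay at most ⌈log₂(∑_{i=1}^k 2^{d_i})⌉. -/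
/-- Binary combination trees whose leaves carry a Boolean value and an
integer arrival time. -/
inductive CTree where
  | leaf : Bool → ℤ → CTree
  | node : CTree → CTree → CTree

/-- The delay of a combination tree. -/
def CTree.delay : CTree → ℤ
  | .leaf _ a => a
  | .node l r => max l.delay r.delay + 1

/-- The leaves (value, arrival time), left to right. -/
def CTree.leaves : CTree → List (Bool × ℤ)
  | .leaf b a => [(b, a)]
  | .node l r => l.leaves ++ r.leaves

/-- Evaluation of a combination tree using a binary Boolean operation. -/
def CTree.eval (op : Bool → Bool → Bool) : CTree → Bool
  | .leaf b _ => b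
  | .node l r => op (l.eval op) (r.eval op)

lemma foldl_push {op : Bool → Bool → Bool} (hassoc : Std.Associative op) :
    ∀ (L : List Bool) (a b : Bool), L.foldl op (op a b) = op a (L.foldl op b)
  | [], a, b => rfl
  | x :: L, a, b => by
    simp only [List.foldl_cons, hassoc.assoc, foldl_push hassoc L]

lemma leaves_ne_nil : ∀ T : CTree, T.leaves ≠ []
  | .leaf b a => by simp [CTree.leaves]
  | .node l r => by simp [CTree.leaves, leaves_ne_nil l]

lemma eval_eq_fold {op : Bool → Bool → Bool} (hassoc : Std.Associative op) :
    ∀ (T : CTree) (a : Bool) (t : List Bool),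
    T.leaves.map Prod.fst = a :: t → T.eval op = t.foldl op a
  | .leaf b d, a, t, h => by
    simp [CTree.leaves] at h
    simp [CTree.eval, h.1, h.2]
  | .node l r, a, t, h => by
    obtain ⟨al, tl, hl⟩ : ∃ al tl, l.leaves.map Prod.fst = al :: tl := by
      cases hh : l.leaves.map Prod.fst with
      | nil => exact absurd (List.map_eq_nil_iff.mp hh) (leaves_ne_nil l)
      | cons x xs => exact ⟨x, xs, rfl⟩
    obtain ⟨ar, tr, hr⟩ : ∃ ar tr, r.leaves.map Prod.fst = ar :: tr := by
      cases hh : r.leaves.map Prod.fst with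
      | nil => exact absurd (List.map_eq_nil_iff.mp hh) (leaves_ne_nil r)
      | cons x xs => exact ⟨x, xs, rfl⟩
    have hT : (CTree.node l r).leaves.map Prod.fst = al :: (tl ++ ar :: tr) := by
      simp [CTree.leaves, hl, hr]
    rw [hT] at h
    injection h with h1 h2
    subst h1; subst h2
    rw [List.foldl_append]
    simp only [List.foldl_cons]
    rw [foldl_push hassoc tr (List.foldl op al tl) ar]
    rw [CTree.eval, eval_eq_fold hassoc l al tl hl, eval_eq_fold hassoc r ar tr hr]

lemma fold_perm {op : Bool → Bool → Bool} (hassoc : Std.Associative op)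
    (hcomm : Std.Commutative op) {l₁ l₂ : List Bool} (hp : l₁.Perm l₂) :
    ∀ a t b s, l₁ = a :: t → l₂ = b :: s → t.foldl op a = s.foldl op b := by
  have : RightCommutative op := ⟨fun a b c => by
    rw [hassoc.assoc, hassoc.assoc, hcomm.comm b c]⟩
  induction hp with
  | nil => intro a t b s h; exact absurd h (by simp)
  | cons x p ih =>
    rintro a t b s h1 h2
    injection h1 with e1 e2; injection h2 with e3 e4
    subst e1; subst e2; subst e3; subst e4
    exact p.foldl_eq _
  | swap x y l =>
    rintro a t b s h1 h2
    injection h1 with e1 e2; injection h2 with e3 e4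
    subst e1; subst e2; subst e3; subst e4
    simp only [List.foldl_cons]
    rw [hcomm.comm]
  | @trans la lm lc p1 p2 ih1 ih2 =>
    rintro a t b s rfl rfl
    cases hm : lm with
    | nil => rw [hm] at p1; simpa using p1.length_eq
    | cons c u => exact (ih1 a t c u rfl hm).trans (ih2 c u b s hm rfl)

lemma list_dvd_sum {a : ℕ} : ∀ {l : List ℕ}, (∀ x ∈ l, a ∣ x) → a ∣ l.sum
  | [], _ => by simp
  | x :: l, h => by
    rw [List.sum_cons]
    exact dvd_add (h x (by simp)) (list_dvd_sum fun y hy => h y (by simp [hy]))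

lemma dvd_le_of_lt_add {a x y : ℕ} (hx : a ∣ x) (hy : a ∣ y) (h : x < y + a) : x ≤ y := by
  by_contra hc
  push_neg at hc
  have h1 : a ∣ x - y := Nat.dvd_sub hx hy
  have h2 : a ≤ x - y := Nat.le_of_dvd (by omega) h1
  omega

lemma exists_min_delay : ∀ (ts : List CTree), ts ≠ [] →
    ∃ t ts', (t :: ts').Perm ts ∧ ∀ u ∈ ts', t.delay ≤ u.delay
  | [], h => absurd rfl h
  | [t], _ => ⟨t, [], List.Perm.refl _, by simp⟩
  | t :: u :: rest, _ => by
    obtain ⟨v, vs, hp, hmin⟩ := exists_min_delay (u :: rest) (by simp)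
    by_cases hc : t.delay ≤ v.delay
    · refine ⟨t, v :: vs, (hp.cons t), ?_⟩
      intro w hw
      rcases List.mem_cons.mp hw with rfl | hw
      · exact hc
      · exact hc.trans (hmin w hw)
    · refine ⟨v, t :: vs, ?_, ?_⟩
      · exact (List.Perm.swap t v vs).trans (hp.cons t)
      · intro w hw
        rcases List.mem_cons.mp hw with rfl | hw
        · omega
        · exact hmin w hw

lemma build_s16 : ∀ (n : ℕ) (ts : List CTree) (m D : ℤ), ts.length = n → ts ≠ [] →
    (∀ t ∈ ts, m ≤ t.delay) → m ≤ D →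
    (ts.map (fun t => 2 ^ (t.delay - m).toNat)).sum ≤ 2 ^ (D - m).toNat →
    ∃ T : CTree, T.leaves.Perm (ts.flatMap CTree.leaves) ∧ T.delay ≤ D := by
  intro n
  induction n using Nat.strong_induction_on with
  | _ n ih =>
  intro ts m D hlen hne hm hmD hsum
  obtain ⟨t₁, ts₁, hp₁, hmin₁⟩ := exists_min_delay ts hne
  rcases ts₁ with _ | ⟨t₂', ts₁'⟩
  · -- singleton case
    have hts : ts = [t₁] := List.perm_singleton.mp hp₁.symm
    subst hts
    have h1 : m ≤ t₁.delay := hm t₁ (by simp)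
    have h2 : (2:ℕ) ^ (t₁.delay - m).toNat ≤ 2 ^ (D - m).toNat := by simpa using hsum
    have h3 : (t₁.delay - m).toNat ≤ (D - m).toNat :=
      (Nat.pow_le_pow_iff_right (by norm_num)).mp h2
    exact ⟨t₁, by simp, by omega⟩
  · -- at least two elements
    obtain ⟨t₂, ts₂, hp₂, hmin₂⟩ := exists_min_delay (t₂' :: ts₁') (by simp)
    have hperm : ts.Perm (t₁ :: t₂ :: ts₂) := hp₁.symm.trans ((hp₂.symm).cons t₁)
    have hd12 : t₁.delay ≤ t₂.delay := hmin₁ t₂ (hp₂.subset (List.mem_cons_self))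
    have hmem : ∀ u ∈ t₁ :: t₂ :: ts₂, u ∈ ts := fun u hu => hperm.symm.subset hu
    have hm1 : m ≤ t₁.delay := hm t₁ (hmem _ (by simp))
    have hm2 : m ≤ t₂.delay := hm t₂ (hmem _ (by simp))
    set f : CTree → ℕ := fun t => 2 ^ (t.delay - m).toNat with hf
    have hsumeq : (ts.map f).sum = f t₁ + (f t₂ + ((ts₂.map f)).sum) := by
      rw [(hperm.map f).sum_eq]; simp
    set R := (ts₂.map f).sum with hR
    set e₂ := (t₂.delay - m).toNat with he₂
    set eD := (D - m).toNat with heD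
    -- divisibility facts
    have hdvdR : 2 ^ e₂ ∣ R := by
      apply list_dvd_sum
      intro x hx
      obtain ⟨u, hu, rfl⟩ := List.mem_map.mp hx
      exact pow_dvd_pow 2 (by
        have h1 := hmin₂ u hu
        have h2 := hm u (hmem u (by simp [hu]))
        omega)
    have he2eD : e₂ ≤ eD := by
      apply (Nat.pow_le_pow_iff_right (by norm_num : 1 < 2)).mp
      calc (2:ℕ) ^ e₂ = f t₂ := rfl
        _ ≤ (ts.map f).sum := by omega
        _ ≤ 2 ^ eD := hsum
    -- the merged tree
    set tn := CTree.node t₁ t₂ with htn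
    have hdn : tn.delay = t₂.delay + 1 := by
      simp [htn, CTree.delay, max_eq_right hd12]
    have hfn : f tn = 2 ^ (e₂ + 1) := by
      rw [hf]; simp only [hdn]
      congr 1
      omega
    have hsum' : ((tn :: ts₂).map f).sum ≤ 2 ^ eD := by
      have hx : ((tn :: ts₂).map f).sum = 2 ^ (e₂ + 1) + R := by simp [hfn, hR]
      rw [hx]
      apply dvd_le_of_lt_add (a := 2 ^ e₂)
      · exact dvd_add (pow_dvd_pow 2 (by omega)) hdvdR
      · exact pow_dvd_pow 2 he2eD
      · have hfe1 : 1 ≤ f t₁ := Nat.one_le_two_pow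
        have hft2 : f t₂ = 2 ^ e₂ := rfl
        have : (2:ℕ) ^ (e₂ + 1) = 2 ^ e₂ + 2 ^ e₂ := by rw [pow_succ]; omega
        omega
    have hlen' : (tn :: ts₂).length = n - 1 := by
      have := hperm.length_eq
      simp at this ⊢
      omega
    have hn2 : 2 ≤ n := by
      have := hperm.length_eq
      simp at this
      omega
    obtain ⟨T, hTl, hTd⟩ := ih (n-1) (by omega) (tn :: ts₂) m D hlen' (by simp)
      (by
        intro t ht
        rcases List.mem_cons.mp ht with rfl | ht
        · omega
        · exact hm t (hmem t (by simp [ht])))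
      hmD hsum'
    refine ⟨T, hTl.trans ?_, hTd⟩
    have heq : (tn :: ts₂).flatMap CTree.leaves = (t₁ :: t₂ :: ts₂).flatMap CTree.leaves := by
      simp [htn, CTree.leaves, List.flatMap_cons, List.append_assoc]
    rw [heq]
    exact (hperm.symm).flatMap_right _

lemma flatMap_leaves_map : ∀ (l : List (Bool × ℤ)),
    (l.map (fun q => CTree.leaf q.1 q.2)).flatMap CTree.leaves = l
  | [] => rfl
  | q :: l => by simp [CTree.leaves, flatMap_leaves_map l]

lemma leaf_delay (q : Bool × ℤ) : (CTree.leaf q.1 q.2).delay = q.2 := rfl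

lemma nat_sum_scaled : ∀ (l : List (Bool × ℤ)) (m : ℤ), (∀ q ∈ l, m ≤ q.2) →
    (((l.map (fun q => CTree.leaf q.1 q.2)).map
        (fun t => (2:ℕ) ^ (t.delay - m).toNat)).sum : ℝ) * (2:ℝ) ^ m
      = (l.map fun q => (2:ℝ) ^ q.2).sum
  | [], m, _ => by simp
  | q :: l, m, h => by
    simp only [List.map_cons, List.sum_cons]
    rw [Nat.cast_add, add_mul, nat_sum_scaled l m (fun q hq => h q (by simp [hq]))]
    congr 1
    push_cast
    have hq : m ≤ q.2 := h q (by simp)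
    have h1 : ((2:ℝ)) ^ ((CTree.leaf q.1 q.2).delay - m).toNat = (2:ℝ) ^ (q.2 - m) := by
      rw [← zpow_natCast]
      congr 1
      rw [leaf_delay]
      omega
    rw [h1, ← zpow_add₀ (by norm_num : (2:ℝ) ≠ 0)]
    congr 1
    ring

/-- Huffman replacement of a multi-input associative commutative gate:
given predecessors `(b₀,d₀),…,(b_k,d_k)`, there is a fan-in-2 realization
computing the same function with delay at most `⌈log₂ ∑ 2^(d_i)⌉`. -/
theorem huffman_gate_replacement (op : Bool → Bool → Bool)
    (hassoc : Std.Associative op) (hcomm : Std.Commutative op)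
    (p : Bool × ℤ) (ps : List (Bool × ℤ)) :
    ∃ T : CTree, T.leaves.Perm (p :: ps) ∧
      T.eval op = (ps.map Prod.fst).foldl op p.1 ∧
      T.delay ≤ ⌈Real.logb 2 (((p :: ps).map (fun q => (2 : ℝ) ^ q.2)).sum)⌉ := by
  set W := ((p :: ps).map (fun q => (2 : ℝ) ^ q.2)).sum with hW
  set D := ⌈Real.logb 2 W⌉ with hD
  have hWpos : 0 < W := by
    apply List.sum_pos
    · intro x hx
      obtain ⟨q, _, rfl⟩ := List.mem_map.mp hx
      positivity
    · simp
  have hWD : W ≤ (2:ℝ) ^ (D:ℤ) := by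
    have hlog : Real.logb 2 W ≤ (D:ℝ) := Int.le_ceil _
    have h2 := (Real.rpow_le_rpow_left_iff (by norm_num : (1:ℝ) < 2)).mpr hlog
    rw [Real.rpow_logb (by norm_num) (by norm_num) hWpos] at h2
    rwa [Real.rpow_intCast] at h2
  set ts := (p :: ps).map (fun q => CTree.leaf q.1 q.2) with hts
  obtain ⟨t₀, ts₀, hp₀, hmin₀⟩ := exists_min_delay ts (by simp [hts])
  set m := t₀.delay with hm
  have hmle : ∀ t ∈ ts, m ≤ t.delay := by
    intro t ht
    rcases List.mem_cons.mp (hp₀.symm.subset ht) with rfl | h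
    · exact le_refl _
    · exact hmin₀ t h
  -- m = q.2 for some q in the list
  obtain ⟨q₀, hq₀, hq₀e⟩ := List.mem_map.mp (hp₀.subset (List.mem_cons_self))
  have hm2 : (2:ℝ) ^ m ≤ W := by
    have : (2:ℝ) ^ q₀.2 ∈ (p :: ps).map (fun q => (2 : ℝ) ^ q.2) :=
      List.mem_map.mpr ⟨q₀, hq₀, rfl⟩
    have h3 := List.single_le_sum (l := (p :: ps).map (fun q => (2 : ℝ) ^ q.2))
      (fun x hx => by obtain ⟨q, _, rfl⟩ := List.mem_map.mp hx; positivity) _ this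
    have hme : m = q₀.2 := by rw [hm, ← hq₀e, leaf_delay]
    rw [hme]
    exact h3
  have hmD : m ≤ D := by
    have : (2:ℝ) ^ m ≤ (2:ℝ) ^ (D:ℤ) := hm2.trans hWD
    exact (zpow_le_zpow_iff_right₀ (by norm_num : (1:ℝ) < 2)).mp this
  have hsum : (ts.map (fun t => 2 ^ (t.delay - m).toNat)).sum ≤ 2 ^ (D - m).toNat := by
    have hreal := nat_sum_scaled (p :: ps) m (by
      intro q hq
      have : CTree.leaf q.1 q.2 ∈ ts := List.mem_map.mpr ⟨q, hq, rfl⟩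
      have := hmle _ this
      rwa [leaf_delay] at this)
    rw [← hts, ← hW] at hreal
    have hpow : (((2:ℕ) ^ (D - m).toNat : ℕ) : ℝ) * (2:ℝ) ^ m = (2:ℝ) ^ (D:ℤ) := by
      push_cast
      rw [← zpow_natCast, ← zpow_add₀ (by norm_num : (2:ℝ) ≠ 0)]
      congr 1
      omega
    have hle : (((ts.map (fun t => (2:ℕ) ^ (t.delay - m).toNat)).sum : ℕ) : ℝ) * (2:ℝ) ^ m ≤
        (((2:ℕ) ^ (D - m).toNat : ℕ) : ℝ) * (2:ℝ) ^ m := by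
      rw [hreal, hpow]; exact hWD
    have hc := le_of_mul_le_mul_right hle (by positivity)
    exact_mod_cast hc
  obtain ⟨T, hTl, hTd⟩ := build_s16 ts.length ts m D rfl (by simp [hts]) hmle hmD hsum
  rw [hts, flatMap_leaves_map] at hTl
  refine ⟨T, hTl, ?_, hTd⟩
  obtain ⟨a, t, hmap⟩ : ∃ a t, T.leaves.map Prod.fst = a :: t := by
    cases hh : T.leaves.map Prod.fst with
    | nil => exact absurd (List.map_eq_nil_iff.mp hh) (leaves_ne_nil T)
    | cons x xs => exact ⟨x, xs, rfl⟩
  rw [eval_eq_fold hassoc T a t hmap]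
  exact fold_perm hassoc hcomm (hTl.map Prod.fst) a t p.1 (ps.map Prod.fst) hmap (by simp)
end
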